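/- Let ψ : F → ℂˣ be a group homomorphism from the additive group of F to the multiplicative group of nonzero complex numbers such that ψ(y) = 1 for all y ∈ 𝔪 (viewing 𝔪 ⊆ R ⊆ F). Let S be the set of all 2×2 matrices over F of the form a·1 + x, where a ∈ Rˣ and x = (x₁₁, x₁₂; x₂₁, x₂₂) satisfies x₁₁, x₂₁, x₂₂ ∈ 𝔪 and x₁₂ ∈ R. Then: (i) every element of S is invertible and S is a subgroup of GL₂(F); (ii) the formula θ₁(a·1 + x) = ψ(a⁻¹·(ϖ⁻¹·x₂₁ + x₁₂)) gives a well-defined map on S (its value does not depend on the chosen decomposition a·1 + x) and θ₁ : S → ℂˣ is a group homomorphism; (iii) likewise, the formula θ₂(a·1 + x) = ψ(a⁻¹·ϖ⁻¹·x₂₁) gives a well-defined group homomorphism θ₂ : S → ℂˣ. -/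

import Mathlib

open IsLocalRing

variable (R : Type*) [CommRing R] [IsDomain R] [IsDiscreteValuationRing R]
variable (F : Type*) [Field F] [Algebra R F] [IsFractionRing R F]

/-- The condition on the "small" part `x` of a decomposition `a·1 + x`:
`x₁₁, x₂₁, x₂₂ ∈ 𝔪` and `x₁₂ ∈ R`. -/
def SmallPart (x : Matrix (Fin 2) (Fin 2) F) : Prop :=
  (∃ r ∈ maximalIdeal R, x 0 0 = algebraMap R F r) ∧
  (∃ r : R, x 0 1 = algebraMap R F r) ∧
  (∃ r ∈ maximalIdeal R, x 1 0 = algebraMap R F r) ∧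
  (∃ r ∈ maximalIdeal R, x 1 1 = algebraMap R F r)

/-- The set `S` of matrices of the form `a·1 + x` with `a ∈ Rˣ` and `x` as above. -/
def Sgrp : Set (Matrix (Fin 2) (Fin 2) F) :=
  {M | ∃ a : Rˣ, ∃ x : Matrix (Fin 2) (Fin 2) F, SmallPart R F x ∧
    M = algebraMap R F (a : R) • (1 : Matrix (Fin 2) (Fin 2) F) + x}

namespace Thm17

variable {R F}

lemma dec_apply (c : F) (x : Matrix (Fin 2) (Fin 2) F) (i j : Fin 2) :
    (c • (1 : Matrix (Fin 2) (Fin 2) F) + x) i j = (if i = j then c else 0) + x i j := by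
  rw [Matrix.add_apply, Matrix.smul_apply, Matrix.one_apply]
  split <;> simp

lemma small_elim {ϖ : R} (hϖ : Ideal.span {ϖ} = maximalIdeal R)
    {x : Matrix (Fin 2) (Fin 2) F} (hx : SmallPart R F x) :
    ∃ c00 c01 s c11 : R, c00 ∈ maximalIdeal R ∧ c11 ∈ maximalIdeal R ∧
      x 0 0 = algebraMap R F c00 ∧ x 0 1 = algebraMap R F c01 ∧
      x 1 0 = algebraMap R F (ϖ * s) ∧ x 1 1 = algebraMap R F c11 := by
  obtain ⟨⟨c00, h00, e00⟩, ⟨c01, e01⟩, ⟨c10, h10, e10⟩, ⟨c11, h11, e11⟩⟩ := hx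
  rw [← hϖ, Ideal.mem_span_singleton] at h10
  obtain ⟨s, rfl⟩ := h10
  exact ⟨c00, c01, s, c11, h00, h11, e00, e01, e10, e11⟩

lemma mem_elim {ϖ : R} (hϖ : Ideal.span {ϖ} = maximalIdeal R)
    {M : Matrix (Fin 2) (Fin 2) F} (hM : M ∈ Sgrp R F) :
    ∃ (a : Rˣ) (c00 c01 s c11 : R), c00 ∈ maximalIdeal R ∧ c11 ∈ maximalIdeal R ∧
      M 0 0 = algebraMap R F ((a : R) + c00) ∧ M 0 1 = algebraMap R F c01 ∧
      M 1 0 = algebraMap R F (ϖ * s) ∧ M 1 1 = algebraMap R F ((a : R) + c11) := by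
  obtain ⟨a, x, hx, rfl⟩ := hM
  obtain ⟨c00, c01, s, c11, h00, h11, e00, e01, e10, e11⟩ := small_elim hϖ hx
  refine ⟨a, c00, c01, s, c11, h00, h11, ?_, ?_, ?_, ?_⟩ <;>
    rw [dec_apply] <;>
    simp [e00, e01, e10, e11, map_add]

lemma mem_of {M : Matrix (Fin 2) (Fin 2) F} (a : Rˣ) (c00 c01 c10 c11 : R)
    (h00 : c00 ∈ maximalIdeal R) (h10 : c10 ∈ maximalIdeal R) (h11 : c11 ∈ maximalIdeal R)
    (e00 : M 0 0 = algebraMap R F ((a : R) + c00)) (e01 : M 0 1 = algebraMap R F c01)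
    (e10 : M 1 0 = algebraMap R F c10) (e11 : M 1 1 = algebraMap R F ((a : R) + c11)) :
    M ∈ Sgrp R F := by
  refine ⟨a, M - algebraMap R F (a : R) • 1,
    ⟨⟨c00, h00, ?_⟩, ⟨c01, ?_⟩, ⟨c10, h10, ?_⟩, ⟨c11, h11, ?_⟩⟩, by abel⟩ <;>
    rw [Matrix.sub_apply, Matrix.smul_apply, Matrix.one_apply] <;>
    simp [e00, e01, e10, e11, map_add]

lemma pi_ne (hϖ : Ideal.span {(ϖ : R)} = maximalIdeal R) : algebraMap R F ϖ ≠ 0 := by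
  have hϖ0 : ϖ ≠ 0 := by
    intro h
    apply IsDiscreteValuationRing.not_a_field R
    rw [← hϖ, h, Ideal.span_singleton_eq_bot]
  simpa using (IsFractionRing.injective R F).ne hϖ0

lemma psi_congr {ψ : F → ℂˣ} (hψadd : ∀ x y : F, ψ (x + y) = ψ x * ψ y)
    (hψm : ∀ r : R, r ∈ maximalIdeal R → ψ (algebraMap R F r) = 1)
    {s t : R} (hst : s - t ∈ maximalIdeal R) :
    ψ (algebraMap R F s) = ψ (algebraMap R F t) := by
  have : algebraMap R F s = algebraMap R F t + algebraMap R F (s - t) := by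
    rw [← map_add]; congr 1; ring
  rw [this, hψadd, hψm _ hst, mul_one]

lemma inv_sub_mem {a a' : Rˣ} (h : (a : R) - (a' : R) ∈ maximalIdeal R) :
    ((a⁻¹ : Rˣ) : R) - ((a'⁻¹ : Rˣ) : R) ∈ maximalIdeal R := by
  have h1 : (a : R) * ((a⁻¹ : Rˣ) : R) = 1 := a.mul_inv
  have h2 : (a' : R) * ((a'⁻¹ : Rˣ) : R) = 1 := a'.mul_inv
  have key : ((a⁻¹ : Rˣ) : R) - ((a'⁻¹ : Rˣ) : R) =
      ((a⁻¹ : Rˣ) : R) * ((a'⁻¹ : Rˣ) : R) * ((a' : R) - (a : R)) := by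
    linear_combination ((a'⁻¹ : Rˣ) : R) * h1 - ((a⁻¹ : Rˣ) : R) * h2
  rw [key]
  exact Ideal.mul_mem_left _ _ (by simpa using neg_mem h)

open scoped Classical in
variable (R F) in
noncomputable def unitPart (M : Matrix (Fin 2) (Fin 2) F) : Rˣ :=
  if h : ∃ a : Rˣ, ∃ x : Matrix (Fin 2) (Fin 2) F, SmallPart R F x ∧
      M = algebraMap R F (a : R) • (1 : Matrix (Fin 2) (Fin 2) F) + x then h.choose else 1

lemma unitPart_spec {M : Matrix (Fin 2) (Fin 2) F} (hM : M ∈ Sgrp R F) :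
    ∃ x : Matrix (Fin 2) (Fin 2) F, SmallPart R F x ∧
      M = algebraMap R F ((unitPart R F M : Rˣ) : R) • (1 : Matrix (Fin 2) (Fin 2) F) + x := by
  have h : ∃ a : Rˣ, ∃ x : Matrix (Fin 2) (Fin 2) F, SmallPart R F x ∧
      M = algebraMap R F (a : R) • (1 : Matrix (Fin 2) (Fin 2) F) + x := hM
  classical
  rw [unitPart, dif_pos h]
  exact h.choose_spec

variable (R F) in
noncomputable def theta (ϖ k : R) (ψ : F → ℂˣ) (M : Matrix (Fin 2) (Fin 2) F) : ℂˣ :=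
  ψ (algebraMap R F (((unitPart R F M)⁻¹ : Rˣ) : R) *
    ((algebraMap R F ϖ)⁻¹ * M 1 0 + algebraMap R F k * M 0 1))

lemma val_eq {ϖ : R} (hϖ : Ideal.span {ϖ} = maximalIdeal R) (b : Rˣ) (s c k : R) :
    algebraMap R F ((b⁻¹ : Rˣ) : R) *
      ((algebraMap R F ϖ)⁻¹ * algebraMap R F (ϖ * s) + algebraMap R F k * algebraMap R F c)
    = algebraMap R F (((b⁻¹ : Rˣ) : R) * (s + k * c)) := by
  rw [map_mul (algebraMap R F) ϖ s, inv_mul_cancel_left₀ (pi_ne hϖ), ← map_mul, ← map_add,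
    ← map_mul]

lemma theta_spec {ϖ : R} (k : R) (hϖ : Ideal.span {ϖ} = maximalIdeal R)
    {ψ : F → ℂˣ} (hψadd : ∀ x y : F, ψ (x + y) = ψ x * ψ y)
    (hψm : ∀ r : R, r ∈ maximalIdeal R → ψ (algebraMap R F r) = 1)
    {M : Matrix (Fin 2) (Fin 2) F} (hM : M ∈ Sgrp R F)
    (a : Rˣ) (c00 : R) (hc00 : c00 ∈ maximalIdeal R)
    (e00 : M 0 0 = algebraMap R F ((a : R) + c00)) :
    theta R F ϖ k ψ M = ψ (algebraMap R F ((a⁻¹ : Rˣ) : R) *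
      ((algebraMap R F ϖ)⁻¹ * M 1 0 + algebraMap R F k * M 0 1)) := by
  obtain ⟨x, hx, hMx⟩ := unitPart_spec hM
  set a' := unitPart R F M with ha'
  obtain ⟨c00', c01', s', c11', h00', h11', f00, f01, f10, f11⟩ := small_elim hϖ hx
  have E00 : M 0 0 = algebraMap R F ((a' : R) + c00') := by
    rw [hMx, dec_apply, if_pos rfl, f00, map_add]
  have E10 : M 1 0 = algebraMap R F (ϖ * s') := by
    rw [hMx, dec_apply, if_neg (by decide), f10, zero_add]
  have E01 : M 0 1 = algebraMap R F c01' := by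
    rw [hMx, dec_apply, if_neg (by decide), f01, zero_add]
  have hdiff : ((a' : R)) - (a : R) ∈ maximalIdeal R := by
    have h := IsFractionRing.injective R F (E00.symm.trans e00)
    have h2 : ((a' : R)) - (a : R) = c00 - c00' := by linear_combination h
    rw [h2]; exact sub_mem hc00 h00'
  rw [theta, E10, E01, val_eq hϖ, val_eq hϖ, ← ha']
  exact psi_congr hψadd hψm (by
    have key : ((a'⁻¹ : Rˣ) : R) * (s' + k * c01') - ((a⁻¹ : Rˣ) : R) * (s' + k * c01') =
        (((a'⁻¹ : Rˣ) : R) - ((a⁻¹ : Rˣ) : R)) * (s' + k * c01') := by ring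
    rw [key]
    exact Ideal.mul_mem_right _ _ (inv_sub_mem hdiff))

lemma pi_mem (hϖ : Ideal.span {(ϖ : R)} = maximalIdeal R) : ϖ ∈ maximalIdeal R := by
  rw [← hϖ]; exact Ideal.mem_span_singleton_self ϖ

lemma mul_mem {ϖ : R} (hϖ : Ideal.span {ϖ} = maximalIdeal R)
    {M N : Matrix (Fin 2) (Fin 2) F} (hM : M ∈ Sgrp R F) (hN : N ∈ Sgrp R F) :
    M * N ∈ Sgrp R F := by
  obtain ⟨a, c00, c01, s, c11, h00, h11, e00, e01, e10, e11⟩ := mem_elim hϖ hM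
  obtain ⟨b, d00, d01, t, d11, g00, g11, f00, f01, f10, f11⟩ := mem_elim hϖ hN
  have hϖm : ϖ ∈ maximalIdeal R := pi_mem hϖ
  have F00 : (M * N) 0 0 = algebraMap R F (((a * b : Rˣ) : R) +
      ((a : R) * d00 + c00 * (b : R) + c00 * d00 + c01 * (ϖ * t))) := by
    rw [Matrix.mul_apply, Fin.sum_univ_two, e00, f00, e01, f10, ← map_mul, ← map_mul, ← map_add]
    exact congrArg _ (by push_cast; ring)
  have F01 : (M * N) 0 1 = algebraMap R F (((a : R) + c00) * d01 + c01 * ((b : R) + d11)) := by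
    rw [Matrix.mul_apply, Fin.sum_univ_two, e00, f01, e01, f11, ← map_mul, ← map_mul, ← map_add]
  have F10 : (M * N) 1 0 = algebraMap R F (ϖ * (s * ((b : R) + d00) + ((a : R) + c11) * t)) := by
    rw [Matrix.mul_apply, Fin.sum_univ_two, e10, f00, e11, f10, ← map_mul, ← map_mul, ← map_add]
    exact congrArg _ (by ring)
  have F11 : (M * N) 1 1 = algebraMap R F (((a * b : Rˣ) : R) +
      (ϖ * s * d01 + (a : R) * d11 + c11 * (b : R) + c11 * d11)) := by
    rw [Matrix.mul_apply, Fin.sum_univ_two, e10, f01, e11, f11, ← map_mul, ← map_mul, ← map_add]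
    exact congrArg _ (by push_cast; ring)
  refine mem_of (a * b) _ _ _ _ ?_ ?_ ?_ F00 F01 F10 F11
  · exact add_mem (add_mem (add_mem (Ideal.mul_mem_left _ _ g00) (Ideal.mul_mem_right _ _ h00))
      (Ideal.mul_mem_right _ _ h00)) (Ideal.mul_mem_left _ _ (Ideal.mul_mem_right _ _ hϖm))
  · exact Ideal.mul_mem_right _ _ hϖm
  · exact add_mem (add_mem (add_mem (Ideal.mul_mem_right _ _ (Ideal.mul_mem_right _ _ hϖm))
      (Ideal.mul_mem_left _ _ g11)) (Ideal.mul_mem_right _ _ h11))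
      (Ideal.mul_mem_right _ _ h11)

lemma theta_hom {ϖ : R} (k : R) (hϖ : Ideal.span {ϖ} = maximalIdeal R)
    {ψ : F → ℂˣ} (hψadd : ∀ x y : F, ψ (x + y) = ψ x * ψ y)
    (hψm : ∀ r : R, r ∈ maximalIdeal R → ψ (algebraMap R F r) = 1)
    {M N : Matrix (Fin 2) (Fin 2) F} (hM : M ∈ Sgrp R F) (hN : N ∈ Sgrp R F) :
    theta R F ϖ k ψ (M * N) = theta R F ϖ k ψ M * theta R F ϖ k ψ N := by
  obtain ⟨a, c00, c01, s, c11, h00, h11, e00, e01, e10, e11⟩ := mem_elim hϖ hM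
  obtain ⟨b, d00, d01, t, d11, g00, g11, f00, f01, f10, f11⟩ := mem_elim hϖ hN
  have hϖm : ϖ ∈ maximalIdeal R := pi_mem hϖ
  have hMN : M * N ∈ Sgrp R F := mul_mem hϖ hM hN
  have F00 : (M * N) 0 0 = algebraMap R F (((a * b : Rˣ) : R) +
      ((a : R) * d00 + c00 * (b : R) + c00 * d00 + c01 * (ϖ * t))) := by
    rw [Matrix.mul_apply, Fin.sum_univ_two, e00, f00, e01, f10, ← map_mul, ← map_mul, ← map_add]
    exact congrArg _ (by push_cast; ring)
  have F01 : (M * N) 0 1 = algebraMap R F (((a : R) + c00) * d01 + c01 * ((b : R) + d11)) := by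
    rw [Matrix.mul_apply, Fin.sum_univ_two, e00, f01, e01, f11, ← map_mul, ← map_mul, ← map_add]
  have F10 : (M * N) 1 0 = algebraMap R F (ϖ * (s * ((b : R) + d00) + ((a : R) + c11) * t)) := by
    rw [Matrix.mul_apply, Fin.sum_univ_two, e10, f00, e11, f10, ← map_mul, ← map_mul, ← map_add]
    exact congrArg _ (by ring)
  have hm00 : (a : R) * d00 + c00 * (b : R) + c00 * d00 + c01 * (ϖ * t) ∈ maximalIdeal R :=
    add_mem (add_mem (add_mem (Ideal.mul_mem_left _ _ g00) (Ideal.mul_mem_right _ _ h00))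
      (Ideal.mul_mem_right _ _ h00)) (Ideal.mul_mem_left _ _ (Ideal.mul_mem_right _ _ hϖm))
  rw [theta_spec k hϖ hψadd hψm hMN (a * b) _ hm00 F00,
    theta_spec k hϖ hψadd hψm hM a c00 h00 e00,
    theta_spec k hϖ hψadd hψm hN b d00 g00 f00,
    F10, F01, e10, e01, f10, f01, val_eq hϖ, val_eq hϖ, val_eq hϖ, ← hψadd, ← map_add]
  apply psi_congr hψadd hψm
  have ha : (a : R) * ((a⁻¹ : Rˣ) : R) = 1 := a.mul_inv
  have hb : (b : R) * ((b⁻¹ : Rˣ) : R) = 1 := b.mul_inv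
  have hAB : (((a * b)⁻¹ : Rˣ) : R) = ((a⁻¹ : Rˣ) : R) * ((b⁻¹ : Rˣ) : R) := by
    rw [mul_inv_rev, Units.val_mul]; ring
  set A := ((a⁻¹ : Rˣ) : R)
  set B := ((b⁻¹ : Rˣ) : R)
  have key : (((a * b)⁻¹ : Rˣ) : R) * (s * ((b : R) + d00) + ((a : R) + c11) * t +
        k * (((a : R) + c00) * d01 + c01 * ((b : R) + d11))) -
      (A * (s + k * c01) + B * (t + k * d01)) =
      A * B * (s * d00 + c11 * t + k * (c00 * d01 + c01 * d11)) := by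
    rw [hAB]
    linear_combination (A * s + k * A * c01) * hb + (B * t + k * B * d01) * ha
  rw [key]
  exact Ideal.mul_mem_left _ _ (add_mem (add_mem (Ideal.mul_mem_left _ _ g00)
    (Ideal.mul_mem_right _ _ h11)) (Ideal.mul_mem_left _ _
    (add_mem (Ideal.mul_mem_right _ _ h00) (Ideal.mul_mem_left _ _ g11))))

lemma inv_mem {ϖ : R} (hϖ : Ideal.span {ϖ} = maximalIdeal R)
    {M : Matrix (Fin 2) (Fin 2) F} (hM : M ∈ Sgrp R F) :
    ∃ Minv ∈ Sgrp R F, M * Minv = 1 ∧ Minv * M = 1 := by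
  obtain ⟨a, c00, c01, s, c11, h00, h11, e00, e01, e10, e11⟩ := mem_elim hϖ hM
  have hϖm : ϖ ∈ maximalIdeal R := pi_mem hϖ
  set u : R := ((a : R) + c00) * ((a : R) + c11) - c01 * (ϖ * s) with hu
  have hum : u - (a : R) * (a : R) ∈ maximalIdeal R := by
    have h : u - (a : R) * (a : R) =
        (a : R) * c11 + c00 * (a : R) + c00 * c11 - c01 * (ϖ * s) := by rw [hu]; ring
    rw [h]
    exact sub_mem (add_mem (add_mem (Ideal.mul_mem_left _ _ h11) (Ideal.mul_mem_right _ _ h00))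
      (Ideal.mul_mem_right _ _ h00)) (Ideal.mul_mem_left _ _ (Ideal.mul_mem_right _ _ hϖm))
  have hu_unit : IsUnit u := by
    by_contra hcon
    have h1 : u ∈ maximalIdeal R := by rwa [IsLocalRing.mem_maximalIdeal, mem_nonunits_iff]
    have h2 : (a : R) * (a : R) ∈ maximalIdeal R := by
      have := sub_mem h1 hum; simpa using this
    have h3 : IsUnit ((a : R) * (a : R)) := a.isUnit.mul a.isUnit
    exact mem_nonunits_iff.mp ((IsLocalRing.mem_maximalIdeal _).mp h2) h3
  set v : Rˣ := hu_unit.unit with hvdef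
  have hv : (v : R) = u := hu_unit.unit_spec
  set V : R := ((v⁻¹ : Rˣ) : R) with hV
  have hvV : u * V = 1 := by rw [← hv]; exact v.mul_inv
  set Minv : Matrix (Fin 2) (Fin 2) F :=
    Matrix.of !![algebraMap R F (V * ((a : R) + c11)), algebraMap R F (-(V * c01));
                 algebraMap R F (ϖ * (-(V * s))), algebraMap R F (V * ((a : R) + c00))] with hMinv
  have i00 : Minv 0 0 = algebraMap R F (V * ((a : R) + c11)) := by rw [hMinv]; rfl
  have i01 : Minv 0 1 = algebraMap R F (-(V * c01)) := by rw [hMinv]; rfl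
  have i10 : Minv 1 0 = algebraMap R F (ϖ * (-(V * s))) := by rw [hMinv]; rfl
  have i11 : Minv 1 1 = algebraMap R F (V * ((a : R) + c00)) := by rw [hMinv]; rfl
  have hMem : Minv ∈ Sgrp R F := by
    refine mem_of (v⁻¹ * a) (V * c11) (-(V * c01)) (ϖ * (-(V * s))) (V * c00)
      (Ideal.mul_mem_left _ _ h11) (Ideal.mul_mem_right _ _ hϖm) (Ideal.mul_mem_left _ _ h00)
      ?_ i01 i10 ?_
    · rw [i00]; exact congrArg _ (by push_cast; ring)
    · rw [i11]; exact congrArg _ (by push_cast; ring)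
  have hMul : M * Minv = 1 := by
    ext i j
    fin_cases i <;> fin_cases j <;>
      simp only [Fin.zero_eta, Fin.mk_one] <;>
      rw [Matrix.mul_apply, Fin.sum_univ_two]
    · rw [e00, e01, i00, i10, ← map_mul, ← map_mul, ← map_add]
      have h : ((a : R) + c00) * (V * ((a : R) + c11)) + c01 * (ϖ * -(V * s)) = 1 := by
        linear_combination hvV - V * hu
      rw [h, map_one]
      simp [Matrix.one_apply]
    · rw [e00, e01, i01, i11, ← map_mul, ← map_mul, ← map_add]
      have h : ((a : R) + c00) * -(V * c01) + c01 * (V * ((a : R) + c00)) = 0 := by ring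
      rw [h, map_zero]
      simp [Matrix.one_apply]
    · rw [e10, e11, i00, i10, ← map_mul, ← map_mul, ← map_add]
      have h : ϖ * s * (V * ((a : R) + c11)) + ((a : R) + c11) * (ϖ * -(V * s)) = 0 := by ring
      rw [h, map_zero]
      simp [Matrix.one_apply]
    · rw [e10, e11, i01, i11, ← map_mul, ← map_mul, ← map_add]
      have h : ϖ * s * -(V * c01) + ((a : R) + c11) * (V * ((a : R) + c00)) = 1 := by
        linear_combination hvV - V * hu
      rw [h, map_one]
      simp [Matrix.one_apply]
  exact ⟨Minv, hMem, hMul, mul_eq_one_comm.mp hMul⟩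

lemma one_mem : (1 : Matrix (Fin 2) (Fin 2) F) ∈ Sgrp R F := by
  refine ⟨1, 0, ⟨⟨0, zero_mem _, by simp⟩, ⟨0, by simp⟩, ⟨0, zero_mem _, by simp⟩,
    ⟨0, zero_mem _, by simp⟩⟩, by simp⟩

end Thm17

/-- (i) `S` is a subgroup of `GL₂(F)`; (ii) the formula
`θ₁(a·1 + x) = ψ(a⁻¹·(ϖ⁻¹·x₂₁ + x₁₂))` is well defined and gives a group homomorphism
`θ₁ : S → ℂˣ`; (iii) likewise `θ₂(a·1 + x) = ψ(a⁻¹·ϖ⁻¹·x₂₁)` gives a well-defined group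
homomorphism `θ₂ : S → ℂˣ`. -/
theorem theta_one_two_well_defined_hom
    (ϖ : R) (hϖ : Ideal.span {ϖ} = maximalIdeal R)
    (ψ : F → ℂˣ) (hψadd : ∀ x y : F, ψ (x + y) = ψ x * ψ y)
    (hψm : ∀ r : R, r ∈ maximalIdeal R → ψ (algebraMap R F r) = 1) :
    -- (i) `S` is a subgroup of `GL₂(F)`
    ((1 : Matrix (Fin 2) (Fin 2) F) ∈ Sgrp R F ∧
      (∀ M ∈ Sgrp R F, ∀ N ∈ Sgrp R F, M * N ∈ Sgrp R F) ∧
      (∀ M ∈ Sgrp R F, ∃ Minv ∈ Sgrp R F, M * Minv = 1 ∧ Minv * M = 1)) ∧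
    -- (ii) `θ₁` is well defined and a homomorphism
    (∃ θ₁ : Matrix (Fin 2) (Fin 2) F → ℂˣ,
      (∀ (a : Rˣ) (x : Matrix (Fin 2) (Fin 2) F), SmallPart R F x →
        θ₁ (algebraMap R F (a : R) • (1 : Matrix (Fin 2) (Fin 2) F) + x) =
          ψ (algebraMap R F ((a⁻¹ : Rˣ) : R) *
            ((algebraMap R F ϖ)⁻¹ * x 1 0 + x 0 1))) ∧
      (∀ M ∈ Sgrp R F, ∀ N ∈ Sgrp R F, θ₁ (M * N) = θ₁ M * θ₁ N)) ∧
    -- (iii) `θ₂` is well defined and a homomorphism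
    (∃ θ₂ : Matrix (Fin 2) (Fin 2) F → ℂˣ,
      (∀ (a : Rˣ) (x : Matrix (Fin 2) (Fin 2) F), SmallPart R F x →
        θ₂ (algebraMap R F (a : R) • (1 : Matrix (Fin 2) (Fin 2) F) + x) =
          ψ (algebraMap R F ((a⁻¹ : Rˣ) : R) * ((algebraMap R F ϖ)⁻¹ * x 1 0))) ∧
      (∀ M ∈ Sgrp R F, ∀ N ∈ Sgrp R F, θ₂ (M * N) = θ₂ M * θ₂ N)) := by
  refine ⟨⟨Thm17.one_mem, fun M hM N hN => Thm17.mul_mem hϖ hM hN,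
      fun M hM => Thm17.inv_mem hϖ hM⟩,
    ⟨Thm17.theta R F ϖ 1 ψ, ?_, fun M hM N hN => Thm17.theta_hom 1 hϖ hψadd hψm hM hN⟩,
    ⟨Thm17.theta R F ϖ 0 ψ, ?_, fun M hM N hN => Thm17.theta_hom 0 hϖ hψadd hψm hM hN⟩⟩
  · intro a x hx
    obtain ⟨c00, c01, s, c11, h00, h11, f00, f01, f10, f11⟩ := Thm17.small_elim hϖ hx
    set M := algebraMap R F (a : R) • (1 : Matrix (Fin 2) (Fin 2) F) + x with hMdef
    have hM : M ∈ Sgrp R F := ⟨a, x, hx, rfl⟩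
    have E00 : M 0 0 = algebraMap R F ((a : R) + c00) := by
      rw [hMdef, Thm17.dec_apply, if_pos rfl, f00, map_add]
    have E10 : M 1 0 = x 1 0 := by rw [hMdef, Thm17.dec_apply, if_neg (by decide), zero_add]
    have E01 : M 0 1 = x 0 1 := by rw [hMdef, Thm17.dec_apply, if_neg (by decide), zero_add]
    rw [Thm17.theta_spec 1 hϖ hψadd hψm hM a c00 h00 E00, E10, E01, map_one, one_mul]
  · intro a x hx
    obtain ⟨c00, c01, s, c11, h00, h11, f00, f01, f10, f11⟩ := Thm17.small_elim hϖ hx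
    set M := algebraMap R F (a : R) • (1 : Matrix (Fin 2) (Fin 2) F) + x with hMdef
    have hM : M ∈ Sgrp R F := ⟨a, x, hx, rfl⟩
    have E00 : M 0 0 = algebraMap R F ((a : R) + c00) := by
      rw [hMdef, Thm17.dec_apply, if_pos rfl, f00, map_add]
    have E10 : M 1 0 = x 1 0 := by rw [hMdef, Thm17.dec_apply, if_neg (by decide), zero_add]
    rw [Thm17.theta_spec 0 hϖ hψadd hψm hM a c00 h00 E00, E10, map_zero, zero_mul, add_zero]
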